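/- If (s₁, s₂, d) is the minimal weight vector of a quasi-homogeneous but non-homogeneous polynomial differential system (P, Q) with P ≢ 0, then gcd(s₁, s₂) = 1. -/

import Mathlib

open MvPolynomial

/-- `(s₁, s₂, d)` is a weight vector of the system `ẋ = P(x,y)`, `ẏ = Q(x,y)`. -/
def IsWeightVector (P Q : MvPolynomial (Fin 2) ℝ) (s₁ s₂ d : ℕ) : Prop :=
  0 < s₁ ∧ 0 < s₂ ∧ 0 < d ∧
  ∀ α : ℝ, 0 < α → ∀ x y : ℝ,
    eval ![α ^ s₁ * x, α ^ s₂ * y] P = α ^ (s₁ + d - 1) * eval ![x, y] P ∧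
    eval ![α ^ s₁ * x, α ^ s₂ * y] Q = α ^ (s₂ + d - 1) * eval ![x, y] Q


lemma eval_pair (p : MvPolynomial (Fin 2) ℝ) (x y : ℝ) :
    eval ![x, y] p = ∑ m ∈ p.support, coeff m p * (x ^ m 0 * y ^ m 1) := by
  rw [eval_eq']
  refine Finset.sum_congr rfl fun m _ => ?_
  rw [Fin.prod_univ_two]
  simp

lemma eval_scale (p : MvPolynomial (Fin 2) ℝ) (s₁ s₂ : ℕ) (α x y : ℝ) :
    eval ![α ^ s₁ * x, α ^ s₂ * y] p
      = ∑ m ∈ p.support, coeff m p * (α ^ (s₁ * m 0 + s₂ * m 1) * (x ^ m 0 * y ^ m 1)) := by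
  rw [eval_pair]
  refine Finset.sum_congr rfl fun m _ => ?_
  rw [mul_pow, mul_pow, ← pow_mul, ← pow_mul, pow_add]
  ring

lemma homog_eval (p : MvPolynomial (Fin 2) ℝ) (s₁ s₂ w : ℕ)
    (h : ∀ m ∈ p.support, s₁ * m 0 + s₂ * m 1 = w) (α x y : ℝ) :
    eval ![α ^ s₁ * x, α ^ s₂ * y] p = α ^ w * eval ![x, y] p := by
  rw [eval_scale, eval_pair, Finset.mul_sum]
  exact Finset.sum_congr rfl fun m hm => by rw [h m hm]; ring

lemma supp_deg (p : MvPolynomial (Fin 2) ℝ) (s₁ s₂ w : ℕ)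
    (h : ∀ x y : ℝ, eval ![(2:ℝ) ^ s₁ * x, (2:ℝ) ^ s₂ * y] p = 2 ^ w * eval ![x, y] p) :
    ∀ m ∈ p.support, s₁ * m 0 + s₂ * m 1 = w := by
  set q : MvPolynomial (Fin 2) ℝ :=
    ∑ m ∈ p.support, monomial m ((2:ℝ) ^ (s₁ * m 0 + s₂ * m 1) * coeff m p) with hq
  have hqp : q = C ((2:ℝ) ^ w) * p := by
    apply MvPolynomial.funext
    intro v
    have hv : ![v 0, v 1] = v := by funext i; fin_cases i <;> rfl
    calc eval v q
        = ∑ m ∈ p.support,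
            (2:ℝ) ^ (s₁ * m 0 + s₂ * m 1) * coeff m p * (v 0 ^ m 0 * v 1 ^ m 1) := by
          rw [hq, map_sum]
          refine Finset.sum_congr rfl fun m _ => ?_
          rw [eval_monomial, Finsupp.prod_pow, Fin.prod_univ_two]
      _ = eval ![(2:ℝ) ^ s₁ * v 0, (2:ℝ) ^ s₂ * v 1] p := by
          rw [eval_scale]
          exact Finset.sum_congr rfl fun m _ => by ring
      _ = 2 ^ w * eval ![v 0, v 1] p := h (v 0) (v 1)
      _ = eval v (C ((2:ℝ) ^ w) * p) := by rw [eval_mul, eval_C, hv]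
  intro m hm
  have hc : coeff m q = (2:ℝ) ^ (s₁ * m 0 + s₂ * m 1) * coeff m p := by
    rw [hq, coeff_sum, Finset.sum_eq_single m]
    · rw [coeff_monomial, if_pos rfl]
    · intro b _ hb; rw [coeff_monomial, if_neg hb]
    · intro hmm; exact absurd hm hmm
  rw [hqp, coeff_C_mul] at hc
  have hcp : coeff m p ≠ 0 := MvPolynomial.mem_support_iff.1 hm
  field_simp at hc
  have hc' := (pow_right_inj₀ (by norm_num : (0:ℝ) < 2) (by norm_num)).1 hc
  omega

/-- if `(s₁, s₂, d)` is the minimal weight vector of a quasi-homogeneous but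
non-homogeneous polynomial system `(P, Q)` with `P ≢ 0`, then `gcd(s₁, s₂) = 1`. -/
theorem minimal_weight_vector_gcd_one
    (P Q : MvPolynomial (Fin 2) ℝ) (s₁ s₂ d : ℕ)
    (hP0 : P ≠ 0)
    (hw : IsWeightVector P Q s₁ s₂ d)
    (hmin : ∀ s₁' s₂' d' : ℕ, IsWeightVector P Q s₁' s₂' d' →
      s₁ ≤ s₁' ∧ s₂ ≤ s₂' ∧ d ≤ d')
    (hnonhom : ¬ ∃ d' : ℕ, IsWeightVector P Q 1 1 d') :
    Nat.gcd s₁ s₂ = 1 := by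
  obtain ⟨h1, h2, h3, h4⟩ := hw
  by_contra hg
  set r := Nat.gcd s₁ s₂ with hr
  have hrpos : 0 < r := Nat.gcd_pos_of_pos_left _ h1
  have hr1 : 1 < r := by omega
  have hP : ∀ m ∈ P.support, s₁ * m 0 + s₂ * m 1 = s₁ + d - 1 :=
    supp_deg P s₁ s₂ _ (fun x y => (h4 2 two_pos x y).1)
  have hQ : ∀ m ∈ Q.support, s₁ * m 0 + s₂ * m 1 = s₂ + d - 1 :=
    supp_deg Q s₁ s₂ _ (fun x y => (h4 2 two_pos x y).2)
  have hds1 : r ∣ s₁ := Nat.gcd_dvd_left _ _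
  have hds2 : r ∣ s₂ := Nat.gcd_dvd_right _ _
  -- r divides d - 1
  obtain ⟨m, hm⟩ := MvPolynomial.support_nonempty.2 hP0
  have hdd : r ∣ d - 1 := by
    have h5 := hP m hm
    have h6 : r ∣ s₁ * m 0 + s₂ * m 1 := Dvd.dvd.add (hds1.mul_right _) (hds2.mul_right _)
    rw [h5] at h6
    have : s₁ + d - 1 = s₁ + (d - 1) := by omega
    rw [this] at h6
    exact (Nat.dvd_add_right hds1).mp h6
  set a := s₁ / r with ha
  set b := s₂ / r with hb
  set e := (d - 1) / r + 1 with he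
  have hra : r * a = s₁ := Nat.mul_div_cancel' hds1
  have hrb : r * b = s₂ := Nat.mul_div_cancel' hds2
  have hrd : r * ((d - 1) / r) = d - 1 := Nat.mul_div_cancel' hdd
  have hPnew : ∀ m ∈ P.support, a * m 0 + b * m 1 = a + e - 1 := by
    intro m hm'
    have h5 := hP m hm'
    have : r * (a * m 0 + b * m 1) = r * (a + ((d-1)/r)) := by
      rw [Nat.mul_add, Nat.mul_add, ← Nat.mul_assoc, ← Nat.mul_assoc, hra, hrb, hrd]
      omega
    have h7 := Nat.eq_of_mul_eq_mul_left hrpos this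
    omega
  have hQnew : ∀ m ∈ Q.support, a * m 0 + b * m 1 = b + e - 1 := by
    intro m hm'
    have h5 := hQ m hm'
    have : r * (a * m 0 + b * m 1) = r * (b + ((d-1)/r)) := by
      rw [Nat.mul_add, Nat.mul_add, ← Nat.mul_assoc, ← Nat.mul_assoc, hra, hrb, hrd]
      omega
    have h7 := Nat.eq_of_mul_eq_mul_left hrpos this
    omega
  have hwv : IsWeightVector P Q a b e := by
    refine ⟨Nat.div_pos (Nat.le_of_dvd h1 hds1) hrpos,
      Nat.div_pos (Nat.le_of_dvd h2 hds2) hrpos, Nat.succ_pos _, ?_⟩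
    intro α hα x y
    exact ⟨homog_eval P a b (a + e - 1) hPnew α x y,
      homog_eval Q a b (b + e - 1) hQnew α x y⟩
  have hle := (hmin a b e hwv).1
  have hlt : a < s₁ := Nat.div_lt_self h1 hr1
  omega
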